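/- Let μ > 0 and λ ∈ [−1,0), and set b(τ) := μ(1+τ)^{−λ}. There exist constants c0 > 0, C > 0, K > 0 and T0 ≥ 0, depending only on μ and λ, with the following property: for every r with 0 ≤ r ≤ c0, every pair of times T0 ≤ s ≤ t, and every twice differentiable function y : ℝ → ℝ satisfying y″(τ) + r²·y(τ) + b(τ)·y′(τ) = 0 for all τ ∈ [s,t] with initial data y(s) = 0 and y′(s) = 1, one has |y(t)| ≤ (K / b(s))·exp( −C·r²·∫_s^t b(τ)^{−1} dτ ). -/

import Mathlib

open Set MeasureTheory intervalIntegral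

private lemma mono_aux {f f' : ℝ → ℝ} {a b : ℝ} (hab : a ≤ b)
    (hf : ∀ x ∈ Set.Icc a b, HasDerivAt f (f' x) x)
    (h0 : ∀ x ∈ Set.Icc a b, 0 ≤ f' x) : f a ≤ f b := by
  have hmono : MonotoneOn f (Set.Icc a b) := by
    apply monotoneOn_of_deriv_nonneg (convex_Icc a b)
    · exact fun x hx => (hf x hx).continuousAt.continuousWithinAt
    · intro x hx
      rw [interior_Icc] at hx
      exact ((hf x (Set.Ioo_subset_Icc_self hx)).differentiableAt).differentiableWithinAt
    · intro x hx
      rw [interior_Icc] at hx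
      rw [(hf x (Set.Ioo_subset_Icc_self hx)).deriv]
      exact h0 x (Set.Ioo_subset_Icc_self hx)
  exact hmono (Set.left_mem_Icc.2 hab) (Set.right_mem_Icc.2 hab) hab

private lemma anti_aux {f f' : ℝ → ℝ} {a b : ℝ} (hab : a ≤ b)
    (hf : ∀ x ∈ Set.Icc a b, HasDerivAt f (f' x) x)
    (h0 : ∀ x ∈ Set.Icc a b, f' x ≤ 0) : f b ≤ f a := by
  have := mono_aux (f := fun x => -f x) (f' := fun x => -(f' x)) hab
    (fun x hx => (hf x hx).neg) (fun x hx => by simpa using h0 x hx)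
  simpa using this

private lemma const_aux {f f' : ℝ → ℝ} {a b : ℝ}
    (hf : ∀ x ∈ Set.Icc a b, HasDerivAt f (f' x) x)
    (h0 : ∀ x ∈ Set.Icc a b, f' x = 0) : ∀ x ∈ Set.Icc a b, f x = f a := by
  intro x hx
  have hsub : Set.Icc a x ⊆ Set.Icc a b := Set.Icc_subset_Icc le_rfl hx.2
  have h1 := mono_aux hx.1 (fun u hu => hf u (hsub hu)) (fun u hu => (h0 u (hsub hu)).ge)
  have h2 := anti_aux hx.1 (fun u hu => hf u (hsub hu)) (fun u hu => (h0 u (hsub hu)).le)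
  linarith

private lemma primitive_hasDerivAt {f : ℝ → ℝ} (hf : Continuous f) (a x : ℝ) :
    HasDerivAt (fun y => ∫ u in a..y, f u) (f x) x :=
  intervalIntegral.integral_hasDerivAt_right (hf.intervalIntegrable a x)
    (hf.stronglyMeasurableAtFilter _ _) hf.continuousAt

private lemma key_ineq (a d c bb bd r : ℝ) (hbb : 0 < bb) (hbd0 : 0 ≤ bd)
    (hbdr : bd ≤ r * bb) (hr : 0 < r) (hrb : 5 * r ≤ bb)
    (hc : c = -(r ^ 2 * a) - bb * d) :
    (2 * a * d + 2 * ((-bd / bb ^ 2) * (a * d) + bb⁻¹ * (d ^ 2 + a * c))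
        + 6 * (bb⁻¹ * (-bd / bb ^ 2) * d ^ 2 + (bb⁻¹) ^ 2 * (d * c)))
      + r ^ 2 / 2 * bb⁻¹ * (a ^ 2 + 2 * bb⁻¹ * (a * d) + 3 * (bb⁻¹) ^ 2 * d ^ 2) ≤ 0 := by
  subst hc
  have hne : bb ≠ 0 := ne_of_gt hbb
  have key : ∀ u v : ℝ, -(2 * bd * bb * (u * v)) - 6 * bd * v ^ 2 - 4 * bb ^ 2 * v ^ 2
      - (3 / 2) * bb ^ 2 * r ^ 2 * u ^ 2 - 5 * r ^ 2 * bb * (u * v)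
      + (3 / 2) * r ^ 2 * v ^ 2 ≤ 0 := by
    intro u v
    set A := |u| with hA
    set D := |v| with hD
    have hA0 : 0 ≤ A := abs_nonneg u
    have hD0 : 0 ≤ D := abs_nonneg v
    have had : -(A * D) ≤ u * v := by
      rw [hA, hD, ← abs_mul]; exact neg_abs_le _
    have ha2 : u ^ 2 = A ^ 2 := (sq_abs u).symm
    have hd2 : v ^ 2 = D ^ 2 := (sq_abs v).symm
    rw [ha2, hd2]
    have hAD : 0 ≤ A * D := mul_nonneg hA0 hD0
    have h1 : -(2 * bd * bb * (u * v)) ≤ 2 * r * bb ^ 2 * (A * D) := by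
      nlinarith [mul_nonneg (sub_nonneg.2 hbdr) hAD, mul_nonneg (mul_nonneg hbd0 hbb.le) (by linarith [had] : 0 ≤ u * v + A * D)]
    have h2 : -(5 * r ^ 2 * bb * (u * v)) ≤ r * bb ^ 2 * (A * D) := by
      nlinarith [mul_nonneg (mul_nonneg (sub_nonneg.2 hrb) hr.le) (mul_nonneg hbb.le hAD),
        mul_nonneg (mul_nonneg (mul_nonneg (by positivity : (0:ℝ) ≤ 5 * r ^ 2) hbb.le) (by norm_num : (0:ℝ) ≤ 1)) (by linarith [had] : 0 ≤ u * v + A * D)]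
    have h3 : 0 ≤ 6 * bd * D ^ 2 := by positivity
    have h4 : (3 / 2) * r ^ 2 * D ^ 2 ≤ (3 / 50) * bb ^ 2 * D ^ 2 := by
      nlinarith [mul_nonneg (mul_nonneg (sub_nonneg.2 hrb) (by linarith : (0:ℝ) ≤ bb + 5 * r)) (sq_nonneg D)]
    have h5 : 3 * r * bb ^ 2 * (A * D) ≤ (3 / 2) * bb ^ 2 * r ^ 2 * A ^ 2 + (3 / 2) * bb ^ 2 * D ^ 2 := by
      nlinarith [mul_nonneg (sq_nonneg bb) (sq_nonneg (r * A - D))]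
    have h6 : 0 ≤ bb ^ 2 * D ^ 2 := by positivity
    linarith
  have heq : ((2 * a * d + 2 * ((-bd / bb ^ 2) * (a * d) + bb⁻¹ * (d ^ 2 + a * (-(r ^ 2 * a) - bb * d)))
        + 6 * (bb⁻¹ * (-bd / bb ^ 2) * d ^ 2 + (bb⁻¹) ^ 2 * (d * (-(r ^ 2 * a) - bb * d))))
      + r ^ 2 / 2 * bb⁻¹ * (a ^ 2 + 2 * bb⁻¹ * (a * d) + 3 * (bb⁻¹) ^ 2 * d ^ 2)) * bb ^ 3
      = -(2 * bd * bb * (a * d)) - 6 * bd * d ^ 2 - 4 * bb ^ 2 * d ^ 2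
      - (3 / 2) * bb ^ 2 * r ^ 2 * a ^ 2 - 5 * r ^ 2 * bb * (a * d)
      + (3 / 2) * r ^ 2 * d ^ 2 := by
    field_simp
    ring
  have h3 : (0:ℝ) < bb ^ 3 := by positivity
  have h4 := key a d
  have h5 : ((2 * a * d + 2 * ((-bd / bb ^ 2) * (a * d) + bb⁻¹ * (d ^ 2 + a * (-(r ^ 2 * a) - bb * d)))
        + 6 * (bb⁻¹ * (-bd / bb ^ 2) * d ^ 2 + (bb⁻¹) ^ 2 * (d * (-(r ^ 2 * a) - bb * d))))
      + r ^ 2 / 2 * bb⁻¹ * (a ^ 2 + 2 * bb⁻¹ * (a * d) + 3 * (bb⁻¹) ^ 2 * d ^ 2)) * bb ^ 3 ≤ 0 * bb ^ 3 := by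
    rw [heq, zero_mul]; exact h4
  exact le_of_mul_le_mul_right h5 h3

set_option maxHeartbeats 1000000 in
/-- Low-frequency upper bound on the Fourier multiplier `Φ₂ᵛ(t,s,r)` of the
damped wave equation `∂_t²v − Δv + b(t)∂_t v = 0` with `b(τ) = μ(1+τ)^(−λ)`. -/
theorem Phi2v_low_frequency_upper_bound
    (μ lam : ℝ) (hμ : 0 < μ) (hlam : lam ∈ Set.Ico (-1:ℝ) 0) :
    ∃ c0 > (0:ℝ), ∃ C > (0:ℝ), ∃ K > (0:ℝ), ∃ T0 ≥ (0:ℝ),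
      ∀ r : ℝ, 0 ≤ r → r ≤ c0 → ∀ s t : ℝ, T0 ≤ s → s ≤ t →
        ∀ y : ℝ → ℝ,
          (∀ τ : ℝ, DifferentiableAt ℝ y τ) →
          (∀ τ : ℝ, DifferentiableAt ℝ (deriv y) τ) →
          (∀ τ ∈ Set.Icc s t,
            deriv (deriv y) τ + r^2 * y τ + (μ * (1+τ)^(-lam)) * deriv y τ = 0) →
          y s = 0 → deriv y s = 1 →
          |y t| ≤ (K / (μ * (1+s)^(-lam))) *
            Real.exp (-C * r^2 * ∫ τ in s..t, (μ * (1+τ)^(-lam))⁻¹) := by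
  obtain ⟨h1lam, h2lam⟩ := hlam
  have hml : 0 < -lam := by linarith
  have hml1 : -lam ≤ 1 := by linarith
  refine ⟨μ / 5, by positivity, 1/4, by norm_num, 12, by norm_num, 0, le_refl 0, ?_⟩
  intro r hr0 hrc s t hs0 hst y hy1 hy2 hode hys hys'
  set b : ℝ → ℝ := fun τ => μ * (1 + τ) ^ (-lam) with hbdef
  -- basic facts about b
  have hbpos : ∀ τ : ℝ, 0 ≤ τ → 0 < b τ := by
    intro τ hτ
    have h1 : (0:ℝ) < 1 + τ := by linarith
    exact mul_pos hμ (Real.rpow_pos_of_pos h1 _)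
  have hbμ : ∀ τ : ℝ, 0 ≤ τ → μ ≤ b τ := by
    intro τ hτ
    have h1 : (1:ℝ) ≤ (1 + τ) ^ (-lam) := by
      calc (1:ℝ) = 1 ^ (-lam) := (Real.one_rpow _).symm
      _ ≤ (1 + τ) ^ (-lam) := Real.rpow_le_rpow (by norm_num) (by linarith) hml.le
    simp only [hbdef]
    nlinarith
  have hbmono : ∀ σ τ : ℝ, 0 ≤ σ → σ ≤ τ → b σ ≤ b τ := by
    intro σ τ h1 h2
    have := Real.rpow_le_rpow (by linarith : (0:ℝ) ≤ 1 + σ) (by linarith : 1 + σ ≤ 1 + τ) hml.le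
    simp only [hbdef]
    nlinarith
  have hbs : 0 < b s := hbpos s hs0
  have hyc : Continuous y := by
    have : Differentiable ℝ y := fun x => hy1 x
    exact this.continuous
  have hy'c : Continuous (deriv y) := by
    have : Differentiable ℝ (deriv y) := fun x => hy2 x
    exact this.continuous
  have hode' : ∀ τ ∈ Set.Icc s t,
      deriv (deriv y) τ = -(r^2 * y τ) - b τ * deriv y τ := by
    intro τ hτ
    have := hode τ hτ
    simp only [hbdef]
    linarith
  -- the function B
  set B : ℝ → ℝ := fun τ => μ / (1 - lam) * ((1 + τ) ^ (1 - lam) - (1 + s) ^ (1 - lam)) with hBdef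
  have hlamne : (1:ℝ) - lam ≠ 0 := by linarith
  have hB : ∀ x : ℝ, HasDerivAt B (b x) x := by
    intro x
    have h1 : HasDerivAt (fun τ : ℝ => (1 + τ) ^ (1 - lam))
        ((1 - lam) * (1 + x) ^ (1 - lam - 1)) x := by
      simpa using HasDerivAt.rpow_const ((hasDerivAt_id x).const_add 1)
        (Or.inr (by linarith : (1:ℝ) ≤ 1 - lam))
    have h2 := (h1.sub_const ((1 + s) ^ (1 - lam))).const_mul (μ / (1 - lam))
    refine h2.congr_deriv (Eq.symm ?_)
    rw [show (1:ℝ) - lam - 1 = -lam by ring]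
    simp only [hbdef]
    field_simp
  have hBs : B s = 0 := by simp [hBdef]
  have hBcont : Continuous B := continuous_iff_continuousAt.mpr fun x => (hB x).continuousAt
  have hexpB : Continuous fun u => Real.exp (B u) := Real.continuous_exp.comp hBcont
  have hexpmB : Continuous fun u => Real.exp (-B u) := Real.continuous_exp.comp hBcont.neg
  -- the fundamental identity
  have hPd : ∀ x : ℝ, HasDerivAt (fun τ => ∫ u in s..τ, Real.exp (B u) * y u)
      (Real.exp (B x) * y x) x := fun x => primitive_hasDerivAt (hexpB.mul hyc) s x
  have hID : ∀ x ∈ Set.Icc s t, Real.exp (B x) * deriv y x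
      = 1 - r ^ 2 * ∫ u in s..x, Real.exp (B u) * y u := by
    set F : ℝ → ℝ := fun τ => Real.exp (B τ) * deriv y τ
      + r ^ 2 * ∫ u in s..τ, Real.exp (B u) * y u with hFdef
    have hFd : ∀ x ∈ Set.Icc s t, HasDerivAt F
        (Real.exp (B x) * b x * deriv y x + Real.exp (B x) * deriv (deriv y) x
          + r ^ 2 * (Real.exp (B x) * y x)) x := by
      intro x hx
      exact (((hB x).exp.mul (hy2 x).hasDerivAt)).add ((hPd x).const_mul (r ^ 2))
    have hF0 : ∀ x ∈ Set.Icc s t, F x = F s := by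
      apply const_aux hFd
      intro x hx
      have h := hode x hx
      have heq : Real.exp (B x) * b x * deriv y x + Real.exp (B x) * deriv (deriv y) x
          + r ^ 2 * (Real.exp (B x) * y x)
          = Real.exp (B x) * (deriv (deriv y) x + r ^ 2 * y x
            + μ * (1 + x) ^ (-lam) * deriv y x) := by
        simp only [hbdef]; ring
      rw [heq, h, mul_zero]
    have hFs : F s = 1 := by
      simp [hFdef, hBs, hys', intervalIntegral.integral_same]
    intro x hx
    have := hF0 x hx
    rw [hFs] at this
    simp only [hFdef] at this
    linarith
  -- integral bounds for exp(±B)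
  have hintB : ∀ u ∈ Set.Icc s t, (∫ v in s..u, Real.exp (B v)) ≤ Real.exp (B u) / b s := by
    intro u hu
    set g : ℝ → ℝ := fun τ => Real.exp (B τ) / b s - ∫ v in s..τ, Real.exp (B v) with hgdef
    have hgd : ∀ x ∈ Set.Icc s u, HasDerivAt g
        (Real.exp (B x) * b x / b s - Real.exp (B x)) x := by
      intro x hx
      exact ((hB x).exp.div_const (b s)).sub (primitive_hasDerivAt hexpB s x)
    have hpos : ∀ x ∈ Set.Icc s u, 0 ≤ Real.exp (B x) * b x / b s - Real.exp (B x) := by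
      intro x hx
      have hbx := hbmono s x hs0 hx.1
      have : Real.exp (B x) * b x / b s - Real.exp (B x)
          = Real.exp (B x) * (b x - b s) / b s := by field_simp
      rw [this]
      apply div_nonneg (mul_nonneg (Real.exp_nonneg _) (by linarith)) hbs.le
    have h := mono_aux hu.1 hgd hpos
    have hgs : g s = 1 / b s := by simp [hgdef, hBs]
    rw [hgs] at h
    simp only [hgdef] at h
    have : 0 ≤ 1 / b s := by positivity
    linarith
  have hintmB : ∀ u ∈ Set.Icc s t, (∫ v in s..u, Real.exp (-B v)) ≤ 1 / b s := by
    intro u hu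
    set g : ℝ → ℝ := fun τ => (∫ v in s..τ, Real.exp (-B v)) + Real.exp (-B τ) / b s with hgdef
    have hgd : ∀ x ∈ Set.Icc s u, HasDerivAt g
        (Real.exp (-B x) + Real.exp (-B x) * -(b x) / b s) x := by
      intro x hx
      exact (primitive_hasDerivAt hexpmB s x).add (((hB x).neg.exp).div_const (b s))
    have hneg : ∀ x ∈ Set.Icc s u, Real.exp (-B x) + Real.exp (-B x) * -(b x) / b s ≤ 0 := by
      intro x hx
      have hbx := hbmono s x hs0 hx.1
      have : Real.exp (-B x) + Real.exp (-B x) * -(b x) / b s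
          = Real.exp (-B x) * (b s - b x) / b s := by field_simp; ring
      rw [this]
      apply div_nonpos_of_nonpos_of_nonneg _ hbs.le
      exact mul_nonpos_of_nonneg_of_nonpos (Real.exp_nonneg _) (by linarith)
    have h := anti_aux hu.1 hgd hneg
    have hgs : g s = 1 / b s := by simp [hgdef, hBs]
    rw [hgs] at h
    simp only [hgdef] at h
    have : 0 ≤ Real.exp (-B u) / b s := by positivity
    linarith
  -- energy bound
  have hy'le : ∀ u ∈ Set.Icc s t, |deriv y u| ≤ 1 := by
    intro u hu
    set E : ℝ → ℝ := fun τ => deriv y τ * deriv y τ + r ^ 2 * (y τ * y τ) with hEdef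
    have hEd : ∀ x ∈ Set.Icc s u, HasDerivAt E
        (deriv (deriv y) x * deriv y x + deriv y x * deriv (deriv y) x
          + r ^ 2 * (deriv y x * y x + y x * deriv y x)) x := by
      intro x hx
      exact (((hy2 x).hasDerivAt.mul (hy2 x).hasDerivAt)).add
        (((hy1 x).hasDerivAt.mul (hy1 x).hasDerivAt).const_mul (r ^ 2))
    have hneg : ∀ x ∈ Set.Icc s u, deriv (deriv y) x * deriv y x + deriv y x * deriv (deriv y) x
        + r ^ 2 * (deriv y x * y x + y x * deriv y x) ≤ 0 := by
      intro x hx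
      have hx' : x ∈ Set.Icc s t := ⟨hx.1, le_trans hx.2 hu.2⟩
      have h := hode' x hx'
      rw [h]
      have hb := hbpos x (le_trans hs0 hx.1)
      nlinarith [sq_nonneg (deriv y x), mul_nonneg hb.le (sq_nonneg (deriv y x))]
    have h := anti_aux hu.1 hEd hneg
    have hEs : E s = 1 := by simp [hEdef, hys, hys']
    rw [hEs] at h
    simp only [hEdef] at h
    rw [abs_le_one_iff_mul_self_le_one]
    nlinarith [sq_nonneg (y u)]
  -- continuity of the inverse integrand
  have hbinvCA : ∀ u : ℝ, 0 ≤ u → ContinuousAt (fun τ : ℝ => (μ * (1 + τ) ^ (-lam))⁻¹) u := by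
    intro u hu
    have h1 : ContinuousAt (fun τ : ℝ => (1 : ℝ) + τ) u := by fun_prop
    have h2 : ContinuousAt (fun τ : ℝ => ((1 : ℝ) + τ) ^ (-lam)) u :=
      h1.rpow_const (Or.inl (by positivity))
    have h3 : ContinuousAt (fun τ : ℝ => μ * ((1 : ℝ) + τ) ^ (-lam)) u :=
      continuousAt_const.mul h2
    exact h3.inv₀ (by positivity)
  -- antiderivative of b⁻¹
  have hGex : ∃ G : ℝ → ℝ, ∀ τ : ℝ, 0 ≤ τ →
      HasDerivAt G ((μ * (1 + τ) ^ (-lam))⁻¹) τ := by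
    by_cases hl : lam = -1
    · refine ⟨fun τ => Real.log (1 + τ) / μ, ?_⟩
      intro τ hτ
      have h0 : (1:ℝ) + τ ≠ 0 := by positivity
      have h1 := (((hasDerivAt_id τ).const_add 1).log h0).div_const μ
      refine h1.congr_deriv (Eq.symm ?_)
      subst hl
      rw [show -(-1 : ℝ) = 1 by norm_num, Real.rpow_one]
      simp only [id]
      field_simp
    · have hl1 : (1:ℝ) + lam ≠ 0 := fun h => hl (by linarith)
      refine ⟨fun τ => (1 + τ) ^ (1 + lam) / (μ * (1 + lam)), ?_⟩
      intro τ hτ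
      have h0 : (0:ℝ) < 1 + τ := by positivity
      have h1 := (((hasDerivAt_id τ).const_add 1).rpow_const (p := 1 + lam)
        (Or.inl (by positivity))).div_const (μ * (1 + lam))
      refine h1.congr_deriv (Eq.symm ?_)
      rw [show (1:ℝ) + lam - 1 = lam by ring, Real.rpow_neg h0.le]
      have h2 : (0:ℝ) < (1 + τ) ^ lam := Real.rpow_pos_of_pos h0 _
      rw [mul_inv, inv_inv]
      field_simp
      rfl
  obtain ⟨G, hG⟩ := hGex
  have hIeq : (∫ τ in s..t, (μ * (1 + τ) ^ (-lam))⁻¹) = G t - G s := by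
    apply intervalIntegral.integral_eq_sub_of_hasDerivAt
    · intro u hu
      rw [Set.uIcc_of_le hst] at hu
      exact hG u (le_trans hs0 hu.1)
    · apply ContinuousOn.intervalIntegrable
      intro u hu
      rw [Set.uIcc_of_le hst] at hu
      exact (hbinvCA u (le_trans hs0 hu.1)).continuousWithinAt
  have hGdiff : ∀ u, s ≤ u → u ≤ t → G u - G s ≤ (u - s) / μ := by
    intro u hsu hut
    have heq : (∫ τ in s..u, (μ * (1 + τ) ^ (-lam))⁻¹) = G u - G s := by
      apply intervalIntegral.integral_eq_sub_of_hasDerivAt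
      · intro v hv
        rw [Set.uIcc_of_le hsu] at hv
        exact hG v (le_trans hs0 hv.1)
      · apply ContinuousOn.intervalIntegrable
        intro v hv
        rw [Set.uIcc_of_le hsu] at hv
        exact (hbinvCA v (le_trans hs0 hv.1)).continuousWithinAt
    rw [← heq]
    have hmono : (∫ τ in s..u, (μ * (1 + τ) ^ (-lam))⁻¹) ≤ ∫ τ in s..u, μ⁻¹ := by
      apply intervalIntegral.integral_mono_on hsu
      · apply ContinuousOn.intervalIntegrable
        intro v hv
        rw [Set.uIcc_of_le hsu] at hv
        exact (hbinvCA v (le_trans hs0 hv.1)).continuousWithinAt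
      · exact intervalIntegrable_const
      · intro v hv
        have := hbμ v (le_trans hs0 hv.1)
        simp only [hbdef] at this
        exact inv_anti₀ hμ this
    rw [intervalIntegral.integral_const, smul_eq_mul] at hmono
    rw [div_eq_mul_inv]
    linarith
  -- the splitting time
  set t₁ : ℝ := if r = 0 then t else min t (max s (-lam / r)) with ht₁def
  have hst₁ : s ≤ t₁ := by
    rw [ht₁def]
    split
    · exact hst
    · exact le_min hst (le_max_left _ _)
  have ht₁t : t₁ ≤ t := by
    rw [ht₁def]
    split
    · exact le_rfl
    · exact min_le_left _ _
  have hrt₁ : r ^ 2 * (t₁ - s) ≤ r := by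
    rw [ht₁def]
    split
    · rename_i h; rw [h]; simp [hst]
    · rename_i h
      have hrpos : 0 < r := lt_of_le_of_ne hr0 (Ne.symm h)
      rcases le_total (-lam / r) s with hc | hc
      · have : min t (max s (-lam / r)) = min t s := by rw [max_eq_left hc]
        rw [this]
        have : min t s ≤ s := min_le_right _ _
        nlinarith [sq_nonneg r]
      · have h1 : min t (max s (-lam / r)) - s ≤ -lam / r := by
          have h2 : min t (max s (-lam / r)) ≤ max s (-lam / r) := min_le_right _ _
          have h3 : max s (-lam / r) = -lam / r := max_eq_right hc
          have h4 : min t (max s (-lam / r)) ≤ -lam / r := le_of_le_of_eq h2 h3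
          linarith [hs0]
        have h4 : r ^ 2 * (-lam / r) = r * (-lam) := by field_simp
        have h5 := mul_le_mul_of_nonneg_left h1 (sq_nonneg r)
        nlinarith [hrpos, hml1]
  -- zone 1 bound
  have hsub1 : Set.Icc s t₁ ⊆ Set.Icc s t := Set.Icc_subset_Icc le_rfl ht₁t
  obtain ⟨τm, hτmem, hτmax⟩ := IsCompact.exists_isMaxOn (isCompact_Icc (a := s) (b := t₁))
    (Set.nonempty_Icc.2 hst₁) (hyc.abs.continuousOn)
  set M : ℝ := |y τm| with hMdef
  have hM0 : 0 ≤ M := abs_nonneg _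
  have hMb : ∀ u ∈ Set.Icc s t₁, |y u| ≤ M := fun u hu => hτmax hu
  have hy'b : ∀ u ∈ Set.Icc s τm, |deriv y u| ≤ Real.exp (-B u) + r ^ 2 * M / b s := by
    intro u hu
    have hut₁ : u ∈ Set.Icc s t₁ := ⟨hu.1, le_trans hu.2 hτmem.2⟩
    have hut : u ∈ Set.Icc s t := hsub1 hut₁
    have hid := hID u hut
    have hPb : |∫ v in s..u, Real.exp (B v) * y v| ≤ M * (Real.exp (B u) / b s) := by
      have h1 : |∫ v in s..u, Real.exp (B v) * y v| ≤ ∫ v in s..u, |Real.exp (B v) * y v| :=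
        intervalIntegral.abs_integral_le_integral_abs hu.1
      have h2 : (∫ v in s..u, |Real.exp (B v) * y v|) ≤ ∫ v in s..u, Real.exp (B v) * M := by
        apply intervalIntegral.integral_mono_on hu.1
        · exact ((hexpB.mul hyc).abs).intervalIntegrable _ _
        · exact (hexpB.mul continuous_const).intervalIntegrable _ _
        · intro v hv
          have hvt₁ : v ∈ Set.Icc s t₁ := ⟨hv.1, le_trans hv.2 hut₁.2⟩
          rw [abs_mul, abs_of_pos (Real.exp_pos _)]
          exact mul_le_mul_of_nonneg_left (hMb v hvt₁) (Real.exp_nonneg _)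
      have h3 : (∫ v in s..u, Real.exp (B v) * M) = (∫ v in s..u, Real.exp (B v)) * M :=
        intervalIntegral.integral_mul_const _ _
      have h4 := hintB u hut
      calc |∫ v in s..u, Real.exp (B v) * y v| ≤ ∫ v in s..u, Real.exp (B v) * M := le_trans h1 h2
        _ = (∫ v in s..u, Real.exp (B v)) * M := h3
        _ ≤ (Real.exp (B u) / b s) * M := mul_le_mul_of_nonneg_right h4 hM0
        _ = M * (Real.exp (B u) / b s) := by ring
    have hkd : deriv y u = Real.exp (-B u)
        * (1 - r ^ 2 * ∫ v in s..u, Real.exp (B v) * y v) := by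
      have hepos : Real.exp (B u) ≠ 0 := (Real.exp_pos _).ne'
      rw [Real.exp_neg, ← hid]
      field_simp
    rw [hkd, abs_mul, abs_of_pos (Real.exp_pos _)]
    have h5 : |1 - r ^ 2 * ∫ v in s..u, Real.exp (B v) * y v|
        ≤ 1 + r ^ 2 * (M * (Real.exp (B u) / b s)) := by
      rw [sub_eq_add_neg]
      refine le_trans (abs_add_le _ _) ?_
      rw [abs_neg, abs_one, abs_mul, abs_of_nonneg (sq_nonneg r)]
      have := mul_le_mul_of_nonneg_left hPb (sq_nonneg r)
      linarith
    have h6 : Real.exp (-B u) * (1 + r ^ 2 * (M * (Real.exp (B u) / b s)))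
        = Real.exp (-B u) + r ^ 2 * M / b s := by
      rw [Real.exp_neg]
      have hepos : Real.exp (B u) ≠ 0 := (Real.exp_pos _).ne'
      field_simp
    calc Real.exp (-B u) * |1 - r ^ 2 * ∫ v in s..u, Real.exp (B v) * y v|
        ≤ Real.exp (-B u) * (1 + r ^ 2 * (M * (Real.exp (B u) / b s))) :=
          mul_le_mul_of_nonneg_left h5 (Real.exp_nonneg _)
      _ = Real.exp (-B u) + r ^ 2 * M / b s := h6
  have hyτm : M ≤ 1 / b s + r ^ 2 * (τm - s) / b s * M := by
    have hfc : y τm = ∫ u in s..τm, deriv y u := by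
      rw [intervalIntegral.integral_deriv_eq_sub (fun x _ => hy1 x)
        (hy'c.intervalIntegrable s τm), hys, sub_zero]
    have h1 : |y τm| ≤ ∫ u in s..τm, |deriv y u| := by
      rw [hfc]; exact intervalIntegral.abs_integral_le_integral_abs hτmem.1
    have h2 : (∫ u in s..τm, |deriv y u|)
        ≤ ∫ u in s..τm, (Real.exp (-B u) + r ^ 2 * M / b s) := by
      apply intervalIntegral.integral_mono_on hτmem.1
      · exact (hy'c.abs).intervalIntegrable _ _
      · exact (hexpmB.add continuous_const).intervalIntegrable _ _
      · exact hy'b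
    have h3 : (∫ u in s..τm, (Real.exp (-B u) + r ^ 2 * M / b s))
        = (∫ u in s..τm, Real.exp (-B u)) + (τm - s) * (r ^ 2 * M / b s) := by
      rw [intervalIntegral.integral_add (hexpmB.intervalIntegrable _ _)
        intervalIntegrable_const, intervalIntegral.integral_const, smul_eq_mul]
    have h4 := hintmB τm (hsub1 hτmem)
    have heqr : (τm - s) * (r ^ 2 * M / b s) = r ^ 2 * (τm - s) / b s * M := by ring
    rw [hMdef]
    linarith [h1, h2, h3, h4]
  have hcoef : r ^ 2 * (τm - s) / b s ≤ 1 / 5 := by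
    have h1 : r ^ 2 * (τm - s) ≤ r ^ 2 * (t₁ - s) :=
      mul_le_mul_of_nonneg_left (sub_le_sub_right hτmem.2 s) (sq_nonneg r)
    rw [div_le_iff₀ hbs]
    have h7 := hbμ s hs0
    linarith [h1, hrt₁, hrc, h7]
  have hMle : M ≤ 2 / b s := by
    have h5 : r ^ 2 * (τm - s) / b s * M ≤ 1 / 5 * M := mul_le_mul_of_nonneg_right hcoef hM0
    have h6 : 0 < 1 / b s := by positivity
    have h8 : 2 / b s = 2 * (1 / b s) := by ring
    linarith [hyτm, h5, h6, h8]
  have hM : ∀ u ∈ Set.Icc s t₁, |y u| ≤ 2 / b s := fun u hu => le_trans (hMb u hu) hMle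
  -- case split
  rcases eq_or_lt_of_le ht₁t with heq | hlt
  · -- zone 1 covers everything
    have hyt : |y t| ≤ 2 / b s := hM t ⟨hst, heq.ge⟩
    rw [hIeq]
    have hrI : r ^ 2 * (G t - G s) ≤ 1 / 5 := by
      have h1 := hGdiff t hst le_rfl
      have h2 := mul_le_mul_of_nonneg_left h1 (sq_nonneg r)
      have h3 : r ^ 2 * (t - s) ≤ μ / 5 := by
        have h3' := hrt₁
        rw [heq] at h3'
        linarith [hrc]
      have h4 : r ^ 2 * ((t - s) / μ) = (r ^ 2 * (t - s)) / μ := by ring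
      have h5 : (r ^ 2 * (t - s)) / μ ≤ (μ / 5) / μ := (div_le_div_iff_of_pos_right hμ).mpr h3
      have h6 : (μ / 5) / μ = 1 / 5 := by field_simp
      linarith
    have hexp1 : (1:ℝ) / 3 ≤ Real.exp (-(1/4) * r ^ 2 * (G t - G s)) := by
      have h2 : Real.exp (-(1:ℝ)) ≤ Real.exp (-(1/4) * r ^ 2 * (G t - G s)) :=
        Real.exp_le_exp.mpr (by nlinarith [hrI])
      have h4 : Real.exp 1 ≤ 3 := by linarith [Real.exp_one_lt_d9]
      have h3 : (1:ℝ) / 3 ≤ Real.exp (-(1:ℝ)) := by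
        rw [Real.exp_neg]
        have := inv_anti₀ (Real.exp_pos 1) h4
        simpa using this
      linarith
    have hfinal : |y t| ≤ 12 / b s * Real.exp (-(1/4) * r ^ 2 * (G t - G s)) := by
      have h2 : 12 / b s * (1 / 3 : ℝ) ≤ 12 / b s * Real.exp (-(1/4) * r ^ 2 * (G t - G s)) :=
        mul_le_mul_of_nonneg_left hexp1 (by positivity)
      have h3 : 12 / b s * (1 / 3 : ℝ) = 4 / b s := by ring
      have h4 : (0:ℝ) ≤ 2 / b s := by positivity
      have h5 : (4:ℝ) / b s - 2 / b s = 2 / b s := by ring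
      linarith
    simpa only [hbdef] using hfinal
  · -- zone 2
    have hrpos : 0 < r := by
      rcases hr0.eq_or_lt with h | h
      · exfalso
        rw [ht₁def, if_pos h.symm] at hlt
        exact lt_irrefl t hlt
      · exact h
    have hrne : r ≠ 0 := ne_of_gt hrpos
    have ht₁eq : t₁ = max s (-lam / r) := by
      rw [ht₁def, if_neg hrne]
      rcases min_cases t (max s (-lam / r)) with ⟨h1, h2⟩ | ⟨h1, h2⟩
      · exfalso
        rw [ht₁def, if_neg hrne, h1] at hlt
        exact lt_irrefl t hlt
      · exact h1
    have hlamr : -lam / r ≤ t₁ := by rw [ht₁eq]; exact le_max_right _ _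
    have hx0 : ∀ x ∈ Set.Icc t₁ t, (0:ℝ) ≤ x :=
      fun x hx => le_trans hs0 (le_trans hst₁ hx.1)
    have h5r : ∀ x ∈ Set.Icc t₁ t, 5 * r ≤ b x := by
      intro x hx
      have := hbμ x (hx0 x hx)
      linarith [hrc]
    set BD : ℝ → ℝ := fun x => μ * (-lam * (1 + x) ^ (-lam - 1)) with hBDdef
    have hbD : ∀ x ∈ Set.Icc t₁ t, HasDerivAt b (BD x) x := by
      intro x hx
      have h0 : (0:ℝ) < 1 + x := by have := hx0 x hx; linarith
      have h1 : HasDerivAt (fun τ : ℝ => (1 + τ) ^ (-lam)) (-lam * (1 + x) ^ (-lam - 1)) x := by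
        simpa using HasDerivAt.rpow_const (p := -lam) ((hasDerivAt_id x).const_add 1)
          (Or.inl (ne_of_gt h0))
      have h2 := h1.const_mul μ
      simp only [hbdef, hBDdef]
      exact h2
    have hBD0 : ∀ x ∈ Set.Icc t₁ t, 0 ≤ BD x := by
      intro x hx
      have h0 : (0:ℝ) < 1 + x := by have := hx0 x hx; linarith
      have h1 := Real.rpow_nonneg h0.le (-lam - 1)
      simp only [hBDdef]
      exact mul_nonneg hμ.le (mul_nonneg hml.le h1)
    have hBDr : ∀ x ∈ Set.Icc t₁ t, BD x ≤ r * b x := by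
      intro x hx
      have h0 : (0:ℝ) < 1 + x := by have := hx0 x hx; linarith
      have hxl : -lam / r ≤ x := le_trans hlamr hx.1
      have hkey : -lam ≤ r * (1 + x) := by
        rw [div_le_iff₀ hrpos] at hxl
        nlinarith [hrpos]
      simp only [hBDdef, hbdef]
      rw [Real.rpow_sub_one (ne_of_gt h0)]
      have hP : (0:ℝ) < (1 + x) ^ (-lam) := Real.rpow_pos_of_pos h0 _
      apply le_of_mul_le_mul_right _ h0
      have he : μ * (-lam * ((1 + x) ^ (-lam) / (1 + x))) * (1 + x)
          = (-lam) * (μ * (1 + x) ^ (-lam)) := by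
        field_simp
      rw [he]
      nlinarith [mul_pos hμ hP, hkey]
    set V : ℝ → ℝ := fun τ => (y τ) ^ 2 + 2 * (b τ)⁻¹ * (y τ * deriv y τ)
      + 3 * ((b τ)⁻¹) ^ 2 * (deriv y τ) ^ 2 with hVdef
    set VD : ℝ → ℝ := fun x => 2 * y x * deriv y x
      + 2 * (-BD x / (b x) ^ 2 * (y x * deriv y x)
        + (b x)⁻¹ * ((deriv y x) ^ 2 + y x * deriv (deriv y) x))
      + 6 * ((b x)⁻¹ * (-BD x / (b x) ^ 2) * (deriv y x) ^ 2
        + ((b x)⁻¹) ^ 2 * (deriv y x * deriv (deriv y) x)) with hVDdef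
    have hbinvD : ∀ x ∈ Set.Icc t₁ t, HasDerivAt (fun τ => (b τ)⁻¹) (-BD x / (b x) ^ 2) x :=
      fun x hx => (hbD x hx).inv (ne_of_gt (hbpos x (hx0 x hx)))
    have hVd : ∀ x ∈ Set.Icc t₁ t, HasDerivAt V (VD x) x := by
      intro x hx
      have c1 := (hy1 x).hasDerivAt.pow 2
      have c2 := (((hbinvD x hx).const_mul 2).mul ((hy1 x).hasDerivAt.mul (hy2 x).hasDerivAt))
      have c3 := ((((hbinvD x hx).pow 2).const_mul 3).mul ((hy2 x).hasDerivAt.pow 2))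
      have h := (c1.add c2).add c3
      refine h.congr_deriv (Eq.symm ?_)
      simp only [hVDdef]
      push_cast
      simp only [Pi.mul_apply, Pi.pow_apply]
      ring
    set W : ℝ → ℝ := fun τ => V τ * Real.exp (r ^ 2 / 2 * G τ) with hWdef
    have hWd : ∀ x ∈ Set.Icc t₁ t, HasDerivAt W
        (VD x * Real.exp (r ^ 2 / 2 * G x)
          + V x * (Real.exp (r ^ 2 / 2 * G x) * (r ^ 2 / 2 * (μ * (1 + x) ^ (-lam))⁻¹))) x := by
      intro x hx
      exact (hVd x hx).mul (((hG x (hx0 x hx)).const_mul (r ^ 2 / 2)).exp)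
    have hWneg : ∀ x ∈ Set.Icc t₁ t, VD x * Real.exp (r ^ 2 / 2 * G x)
          + V x * (Real.exp (r ^ 2 / 2 * G x) * (r ^ 2 / 2 * (μ * (1 + x) ^ (-lam))⁻¹)) ≤ 0 := by
      intro x hx
      have hxst : x ∈ Set.Icc s t := ⟨le_trans hst₁ hx.1, hx.2⟩
      have hkey := key_ineq (y x) (deriv y x) (deriv (deriv y) x) (b x) (BD x) r
        (hbpos x (hx0 x hx)) (hBD0 x hx) (hBDr x hx) hrpos (h5r x hx) (hode' x hxst)
      have h1 : VD x + r ^ 2 / 2 * (b x)⁻¹ * V x ≤ 0 := by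
        simp only [hVDdef, hVdef]
        calc 2 * y x * deriv y x
              + 2 * (-BD x / (b x) ^ 2 * (y x * deriv y x)
                + (b x)⁻¹ * ((deriv y x) ^ 2 + y x * deriv (deriv y) x))
              + 6 * ((b x)⁻¹ * (-BD x / (b x) ^ 2) * (deriv y x) ^ 2
                + ((b x)⁻¹) ^ 2 * (deriv y x * deriv (deriv y) x))
              + r ^ 2 / 2 * (b x)⁻¹ * ((y x) ^ 2 + 2 * (b x)⁻¹ * (y x * deriv y x)
                + 3 * ((b x)⁻¹) ^ 2 * (deriv y x) ^ 2)
            = (2 * y x * deriv y x + 2 * ((-BD x / (b x) ^ 2) * (y x * deriv y x)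
                + (b x)⁻¹ * ((deriv y x) ^ 2 + y x * deriv (deriv y) x))
                + 6 * ((b x)⁻¹ * (-BD x / (b x) ^ 2) * (deriv y x) ^ 2
                + ((b x)⁻¹) ^ 2 * (deriv y x * deriv (deriv y) x)))
              + r ^ 2 / 2 * (b x)⁻¹ * ((y x) ^ 2 + 2 * (b x)⁻¹ * (y x * deriv y x)
                + 3 * ((b x)⁻¹) ^ 2 * (deriv y x) ^ 2) := by ring
          _ ≤ 0 := hkey
      have heq3 : VD x * Real.exp (r ^ 2 / 2 * G x)
          + V x * (Real.exp (r ^ 2 / 2 * G x) * (r ^ 2 / 2 * (μ * (1 + x) ^ (-lam))⁻¹))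
          = (VD x + r ^ 2 / 2 * (b x)⁻¹ * V x) * Real.exp (r ^ 2 / 2 * G x) := by
        simp only [hbdef]
        ring
      rw [heq3]
      exact mul_nonpos_iff.mpr (Or.inr ⟨h1, (Real.exp_pos _).le⟩)
    have hWanti := anti_aux (le_of_lt hlt) hWd hWneg
    have hWt : V t * Real.exp (r ^ 2 / 2 * G t) ≤ V t₁ * Real.exp (r ^ 2 / 2 * G t₁) := by
      simpa only [hWdef] using hWanti
    -- bounds at t₁
    have hbt₁ : 0 < b t₁ := hbpos t₁ (le_trans hs0 hst₁)
    have hbt : 0 < b t := hbpos t (le_trans hs0 (le_trans hst₁ ht₁t))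
    have hbinv1 : (b t₁)⁻¹ ≤ (b s)⁻¹ := inv_anti₀ hbs (hbmono s t₁ hs0 hst₁)
    have hbinv0 : 0 < (b t₁)⁻¹ := by positivity
    have hA1 : |y t₁| ≤ 2 / b s := hM t₁ ⟨hst₁, le_rfl⟩
    have hD1 : |deriv y t₁| ≤ 1 := hy'le t₁ ⟨hst₁, ht₁t⟩
    have hVt1 : V t₁ ≤ 11 / (b s) ^ 2 := by
      simp only [hVdef]
      have e1 : (y t₁) ^ 2 ≤ (2 / b s) ^ 2 := by
        rw [← sq_abs (y t₁)]
        exact pow_le_pow_left₀ (abs_nonneg _) hA1 2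
      have e2 : y t₁ * deriv y t₁ ≤ 2 / b s := by
        calc y t₁ * deriv y t₁ ≤ |y t₁ * deriv y t₁| := le_abs_self _
          _ = |y t₁| * |deriv y t₁| := abs_mul _ _
          _ ≤ (2 / b s) * 1 := mul_le_mul hA1 hD1 (abs_nonneg _) (by positivity)
          _ = 2 / b s := mul_one _
      have e2' : 2 * (b t₁)⁻¹ * (y t₁ * deriv y t₁) ≤ 2 * (b s)⁻¹ * (2 / b s) := by
        have s1 : 2 * (b t₁)⁻¹ * (y t₁ * deriv y t₁) ≤ 2 * (b t₁)⁻¹ * (2 / b s) :=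
          mul_le_mul_of_nonneg_left e2 (by positivity)
        have s2 : 2 * (b t₁)⁻¹ * (2 / b s) ≤ 2 * (b s)⁻¹ * (2 / b s) := by
          have h0' : (0:ℝ) ≤ 2 / b s := by positivity
          have h1' := mul_le_mul_of_nonneg_right hbinv1 h0'
          linarith only [h1']
        linarith only [s1, s2]
      have e3 : 3 * ((b t₁)⁻¹) ^ 2 * (deriv y t₁) ^ 2 ≤ 3 * ((b s)⁻¹) ^ 2 := by
        have d2 : (deriv y t₁) ^ 2 ≤ 1 := by
          rw [← sq_abs (deriv y t₁)]
          nlinarith [abs_nonneg (deriv y t₁)]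
        have b2 : ((b t₁)⁻¹) ^ 2 ≤ ((b s)⁻¹) ^ 2 := pow_le_pow_left₀ hbinv0.le hbinv1 2
        have m1 : ((b t₁)⁻¹) ^ 2 * (deriv y t₁) ^ 2 ≤ ((b t₁)⁻¹) ^ 2 * 1 :=
          mul_le_mul_of_nonneg_left d2 (pow_nonneg hbinv0.le 2)
        linarith only [m1, b2]
      have e4 : (2 / b s) ^ 2 + 2 * (b s)⁻¹ * (2 / b s) + 3 * ((b s)⁻¹) ^ 2
          = 11 / (b s) ^ 2 := by
        field_simp
        ring
      linarith only [e1, e2', e3, e4]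
    have hVt2 : (y t) ^ 2 ≤ 2 * V t := by
      simp only [hVdef]
      have q1 := sq_nonneg (y t + 2 * (b t)⁻¹ * deriv y t)
      have q2 := sq_nonneg ((b t)⁻¹ * deriv y t)
      nlinarith only [q1, q2]
    have hG1 : r ^ 2 * (G t₁ - G s) ≤ 1 / 5 := by
      have h1 := hGdiff t₁ hst₁ ht₁t
      have h2 := mul_le_mul_of_nonneg_left h1 (sq_nonneg r)
      have h3 : r ^ 2 * ((t₁ - s) / μ) = (r ^ 2 * (t₁ - s)) / μ := by ring
      have h4 : (r ^ 2 * (t₁ - s)) / μ ≤ (μ / 5) / μ := (div_le_div_iff_of_pos_right hμ).mpr (by linarith [hrt₁, hrc])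
      have h5 : (μ / 5) / μ = 1 / 5 := by field_simp
      linarith only [h2, h3, h4, h5]
    have hEt : (0:ℝ) < Real.exp (r ^ 2 / 2 * G t) := Real.exp_pos _
    have hstep : V t ≤ (11 / (b s) ^ 2) * (3 * Real.exp (r ^ 2 / 2 * G s))
        * (Real.exp (r ^ 2 / 2 * G t))⁻¹ := by
      have hexpb : Real.exp (r ^ 2 / 2 * G t₁) ≤ 3 * Real.exp (r ^ 2 / 2 * G s) := by
        have h2 : r ^ 2 / 2 * G t₁ ≤ r ^ 2 / 2 * G s + 1 := by linarith only [hG1]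
        calc Real.exp (r ^ 2 / 2 * G t₁) ≤ Real.exp (r ^ 2 / 2 * G s + 1) :=
              Real.exp_le_exp.mpr h2
          _ = Real.exp (r ^ 2 / 2 * G s) * Real.exp 1 := Real.exp_add _ _
          _ ≤ Real.exp (r ^ 2 / 2 * G s) * 3 := by
              have he3 : Real.exp 1 ≤ 3 := by linarith only [Real.exp_one_lt_d9]
              exact mul_le_mul_of_nonneg_left he3 (Real.exp_nonneg _)
          _ = 3 * Real.exp (r ^ 2 / 2 * G s) := by ring
      have h1 : V t₁ * Real.exp (r ^ 2 / 2 * G t₁)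
          ≤ (11 / (b s) ^ 2) * (3 * Real.exp (r ^ 2 / 2 * G s)) :=
        mul_le_mul hVt1 hexpb (Real.exp_nonneg _) (by positivity)
      calc V t = V t * Real.exp (r ^ 2 / 2 * G t) * (Real.exp (r ^ 2 / 2 * G t))⁻¹ := by
            field_simp
        _ ≤ ((11 / (b s) ^ 2) * (3 * Real.exp (r ^ 2 / 2 * G s)))
            * (Real.exp (r ^ 2 / 2 * G t))⁻¹ :=
          mul_le_mul_of_nonneg_right (le_trans hWt h1) (by positivity)
    have hysq : (y t) ^ 2 ≤ 66 / (b s) ^ 2 * Real.exp (-(1/2) * r ^ 2 * (G t - G s)) := by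
      have hexpeq : Real.exp (r ^ 2 / 2 * G s) * (Real.exp (r ^ 2 / 2 * G t))⁻¹
          = Real.exp (-(1/2) * r ^ 2 * (G t - G s)) := by
        rw [← Real.exp_neg, ← Real.exp_add]
        congr 1
        ring
      calc (y t) ^ 2 ≤ 2 * V t := hVt2
        _ ≤ 2 * ((11 / (b s) ^ 2) * (3 * Real.exp (r ^ 2 / 2 * G s))
            * (Real.exp (r ^ 2 / 2 * G t))⁻¹) := by linarith only [hstep]
        _ = 66 / (b s) ^ 2 * (Real.exp (r ^ 2 / 2 * G s) * (Real.exp (r ^ 2 / 2 * G t))⁻¹) := by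
            ring
        _ = 66 / (b s) ^ 2 * Real.exp (-(1/2) * r ^ 2 * (G t - G s)) := by rw [hexpeq]
    have hRHS : (y t) ^ 2 ≤ (12 / b s * Real.exp (-(1/4) * r ^ 2 * (G t - G s))) ^ 2 := by
      have hz : Real.exp (-(1/4) * r ^ 2 * (G t - G s)) ^ 2
          = Real.exp (-(1/2) * r ^ 2 * (G t - G s)) := by
        rw [sq, ← Real.exp_add]
        congr 1
        ring
      have h1 : (12 / b s * Real.exp (-(1/4) * r ^ 2 * (G t - G s))) ^ 2
          = 144 / (b s) ^ 2 * Real.exp (-(1/2) * r ^ 2 * (G t - G s)) := by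
        rw [mul_pow, hz, div_pow]
        norm_num
      rw [h1]
      have h2 : (0:ℝ) ≤ 78 / (b s) ^ 2 * Real.exp (-(1/2) * r ^ 2 * (G t - G s)) := by
        positivity
      have h3 : 66 / (b s) ^ 2 * Real.exp (-(1/2) * r ^ 2 * (G t - G s))
          + 78 / (b s) ^ 2 * Real.exp (-(1/2) * r ^ 2 * (G t - G s))
          = 144 / (b s) ^ 2 * Real.exp (-(1/2) * r ^ 2 * (G t - G s)) := by ring
      linarith only [hysq, h2, h3]
    have hRHS0 : (0:ℝ) ≤ 12 / b s * Real.exp (-(1/4) * r ^ 2 * (G t - G s)) := by positivity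
    have hfin := Real.sqrt_le_sqrt hRHS
    rw [Real.sqrt_sq_eq_abs, Real.sqrt_sq hRHS0] at hfin
    rw [hIeq]
    simpa only [hbdef] using hfin
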